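/- For the p-typical Witt vectors, the total ghost map gh_{≤n} : W_n(A) → A^{n+1} is integral, and its kernel I satisfies I^{2^n} = 0. -/

import Mathlib

open WittVector Polynomial


/-- For the `p`-typical Witt vectors (normalized indexing, so
`W_n = TruncatedWittVector p (n+1)` with ghost components `gh_0, …, gh_n`), the total ghost
map `gh_{≤n} : W_n(A) → A^{n+1}` is integral, and its kernel `I` satisfies `I^(2^n) = 0`.
The total ghost map on the truncated Witt vectors is characterized as the unique ring
homomorphism compatible (via the truncation map) with the ghost components of `W(A)`. -/
theorem ghost_map_integral_and_kernel_nilpotent (p : ℕ) [Fact p.Prime] (n : ℕ)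
    (A : Type) [CommRing A]
    (gh : TruncatedWittVector p (n + 1) A →+* (Fin (n + 1) → A))
    (hgh : ∀ (x : WittVector p A) (i : Fin (n + 1)),
      gh (WittVector.truncate (n + 1) x) i = WittVector.ghostComponent (i : ℕ) x) :
    gh.IsIntegral ∧ (RingHom.ker gh) ^ (2 ^ n) = ⊥ := by
  -- auxiliary facts about ghost components
  have ghost_zero : ∀ x : WittVector p A, WittVector.ghostComponent 0 x = x.coeff 0 := by
    intro x
    simp [WittVector.ghostComponent_apply, wittPolynomial_zero]
  have ghost_iter_frob : ∀ (k : ℕ) (x : WittVector p A),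
      WittVector.ghostComponent 0 (frobenius^[k] x) = WittVector.ghostComponent k x := by
    intro k
    induction k with
    | zero => intro x; rfl
    | succ k ih =>
      intro x
      rw [Function.iterate_succ_apply, ih, ghostComponent_frobenius]
  have iter_versch_lt : ∀ (w : WittVector p A) (k i : ℕ), i < k →
      (verschiebung^[k] w).coeff i = 0 := by
    intro w k
    induction k generalizing w with
    | zero => omega
    | succ k ih =>
      intro i hi
      rw [Function.iterate_succ_apply']
      cases i with
      | zero => exact verschiebung_coeff_zero _
      | succ i => rw [verschiebung_coeff_succ]; exact ih _ i (by omega)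
  constructor
  · -- Integrality
    have single_int : ∀ (i : Fin (n + 1)) (a : A), gh.IsIntegralElem (Pi.single i a) := by
      intro i a
      refine ⟨X ^ (p ^ (i : ℕ) + 1)
        - C (WittVector.truncate (n + 1) (WittVector.teichmuller p a)) * X, ?_, ?_⟩
      · refine monic_X_pow_sub ?_
        refine lt_of_le_of_lt (degree_C_mul_X_le _) ?_
        exact_mod_cast Nat.lt_add_of_pos_left (Nat.pow_pos (Fact.out : p.Prime).pos)
      · have hg : gh (WittVector.truncate (n + 1) (WittVector.teichmuller p a)) i
            = a ^ p ^ (i : ℕ) := by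
          rw [hgh, ghostComponent_teichmuller]
        simp only [eval₂_sub, eval₂_pow, eval₂_X, eval₂_mul, eval₂_C]
        funext j
        simp only [Pi.sub_apply, Pi.pow_apply, Pi.mul_apply, Pi.zero_apply]
        rcases eq_or_ne j i with rfl | hj
        · rw [Pi.single_eq_same, hg, pow_succ, sub_self]
        · rw [Pi.single_eq_of_ne hj, zero_pow (by positivity), mul_zero, sub_zero]
    intro f
    letI : Algebra (TruncatedWittVector p (n + 1) A) (Fin (n + 1) → A) := gh.toAlgebra
    have : IsIntegral (TruncatedWittVector p (n + 1) A) f := by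
      rw [← Finset.univ_sum_single f]
      exact IsIntegral.sum _ (fun i _ => single_int i (f i))
    exact this
  · -- Kernel nilpotency
    set tr := (WittVector.truncate (n + 1) : WittVector p A →+* TruncatedWittVector p (n + 1) A)
      with htr
    set G : Ideal (WittVector p A) := Ideal.comap tr (RingHom.ker gh) with hGdef
    have hG : ∀ x ∈ G, ∀ i : ℕ, i ≤ n → WittVector.ghostComponent i x = 0 := by
      intro x hx i hi
      have hx' : gh (tr x) = 0 := by simpa [hGdef, RingHom.mem_ker] using hx
      have := hgh x ⟨i, by omega⟩
      simp only [hx', Pi.zero_apply] at this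
      exact this.symm
    have main : ∀ k : ℕ, k ≤ n →
        G ^ (2 ^ k) ≤ RingHom.ker (WittVector.truncate (p := p) (k + 1)) := by
      intro k
      induction k with
      | zero =>
        intro _
        rw [pow_zero, pow_one]
        intro x hx
        rw [WittVector.mem_ker_truncate]
        intro i hi
        interval_cases i
        rw [← ghost_zero]
        exact hG x hx 0 (by omega)
      | succ k ih =>
        intro hk
        have h2 : (2 : ℕ) ^ (k + 1) = 2 ^ k * 2 := by ring
        rw [h2, pow_mul, sq]
        rw [Ideal.mul_le]
        intro x hx y hy
        have hxk := ih (by omega) hx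
        have hyG : y ∈ G := Ideal.pow_le_self (Nat.two_pow_pos k).ne' hy
        have hx0 : ∀ i < k + 1, x.coeff i = 0 := (WittVector.mem_ker_truncate _ x).mp hxk
        have hmul : x * y = verschiebung^[k + 1] (x.shift (k + 1) * frobenius^[k + 1] y) := by
          conv_lhs => rw [WittVector.eq_iterate_verschiebung hx0]
          exact iterate_verschiebung_mul_left _ _ _
        rw [WittVector.mem_ker_truncate]
        intro i hi
        rw [hmul]
        rcases Nat.lt_or_ge i (k + 1) with h | h
        · exact iter_versch_lt _ _ _ h
        · have hik : i = k + 1 := by omega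
          subst hik
          have h0 : ((verschiebung)^[k + 1] (x.shift (k + 1) * frobenius^[k + 1] y)).coeff (k + 1)
              = (x.shift (k + 1) * frobenius^[k + 1] y).coeff 0 := by
            simpa using iterate_verschiebung_coeff (x.shift (k + 1) * frobenius^[k + 1] y) (k + 1) 0
          have h1 : (frobenius^[k + 1] y).coeff 0 = 0 := by
            rw [← ghost_zero, ghost_iter_frob]; exact hG y hyG _ hk
          rw [h0, WittVector.mul_coeff_zero, h1, mul_zero]
    have hIG : RingHom.ker gh = Ideal.map tr G :=
      (Ideal.map_comap_of_surjective tr (WittVector.truncate_surjective p (n + 1) A) _).symm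
    rw [hIG, ← Ideal.map_pow]
    rw [← le_bot_iff]
    rw [Ideal.map_le_iff_le_comap]
    refine le_trans (main n le_rfl) ?_
    intro x hx
    simpa [Ideal.mem_comap, RingHom.mem_ker] using hx
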